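/- The energy of the Altes chirplet is ∫_ℝ |U(ω)|² dω = ω₀·√(π/(2κ))·exp(1/(8κ)); equivalently (1/2π)∫_ℝ |U(ω)|² dω = (ω₀/√(8πκ))·exp(1/(8κ)). -/

import Mathlib

open MeasureTheory

/-- The reparameterized Altes chirplet frequency response. -/
noncomputable def altes (κ ω₀ lam : ℝ) : ℝ → ℂ := fun ω =>
  if 0 < ω then
    Complex.exp (-(↑(κ * (Real.log (ω / ω₀)) ^ 2) : ℂ)) *
      Complex.exp (2 * Real.pi * Complex.I * Real.log ω / Real.log lam)
  else 0

lemma altes_norm_sq (κ ω₀ lam : ℝ) (ω : ℝ) :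
    ‖altes κ ω₀ lam ω‖ ^ 2 =
      Set.indicator (Set.Ioi (0:ℝ))
        (fun ω => Real.exp (-(2*κ) * (Real.log (ω / ω₀)) ^ 2)) ω := by
  unfold altes
  by_cases h : 0 < ω
  · rw [if_pos h, Set.indicator_of_mem (Set.mem_Ioi.mpr h)]
    have h2 : (2 * Real.pi * Complex.I * (Real.log ω : ℂ) / (Real.log lam : ℂ)) =
        ((2 * Real.pi * Real.log ω / Real.log lam : ℝ) : ℂ) * Complex.I := by
      push_cast
      by_cases hl : (Real.log lam : ℂ) = 0
      · simp [hl]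
      · field_simp
    rw [norm_mul, h2]
    rw [Complex.norm_exp, Complex.norm_exp]
    simp only [Complex.neg_re, Complex.ofReal_re, Complex.mul_re, Complex.ofReal_im,
      Complex.I_re, Complex.I_im, mul_zero, mul_one, zero_sub, zero_mul, sub_zero]
    rw [Real.exp_zero, mul_one, sq, ← Real.exp_add]
    congr 1
    ring
  · rw [if_neg h, Set.indicator_of_notMem (by simpa using h)]
    simp

/-- The energy of the Altes chirplet is
∫ |U(ω)|² dω = ω₀·√(π/(2κ))·exp(1/(8κ)); equivalently
(1/2π)∫ |U(ω)|² dω = (ω₀/√(8πκ))·exp(1/(8κ)). -/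
theorem altes_energy (κ ω₀ lam : ℝ) (hκ : 0 < κ) (hω₀ : 0 < ω₀)
    (hlam : 0 < lam) (hlam1 : lam ≠ 1) :
    (∫ ω : ℝ, ‖altes κ ω₀ lam ω‖ ^ 2) =
      ω₀ * Real.sqrt (Real.pi / (2 * κ)) * Real.exp (1 / (8 * κ)) ∧
    (1 / (2 * Real.pi)) * (∫ ω : ℝ, ‖altes κ ω₀ lam ω‖ ^ 2) =
      (ω₀ / Real.sqrt (8 * Real.pi * κ)) * Real.exp (1 / (8 * κ)) := by
  have h2κ : 0 < 2 * κ := by linarith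
  have key : (∫ ω : ℝ, ‖altes κ ω₀ lam ω‖ ^ 2) =
      ω₀ * Real.sqrt (Real.pi / (2 * κ)) * Real.exp (1 / (8 * κ)) := by
    simp_rw [altes_norm_sq]
    rw [MeasureTheory.integral_indicator measurableSet_Ioi]
    -- change of variables ω = ω₀ * exp t
    have himage : (fun t : ℝ => ω₀ * Real.exp t) '' Set.univ = Set.Ioi 0 := by
      ext x
      simp only [Set.image_univ, Set.mem_range, Set.mem_Ioi]
      constructor
      · rintro ⟨t, rfl⟩; positivity
      · intro hx; exact ⟨Real.log (x / ω₀), by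
          rw [Real.exp_log (by positivity)]
          field_simp⟩
    have hderiv : ∀ t ∈ (Set.univ : Set ℝ),
        HasDerivWithinAt (fun t : ℝ => ω₀ * Real.exp t) (ω₀ * Real.exp t) Set.univ t := by
      intro t _
      exact ((Real.hasDerivAt_exp t).const_mul ω₀).hasDerivWithinAt
    have hinj : Set.InjOn (fun t : ℝ => ω₀ * Real.exp t) Set.univ := by
      intro a _ b _ hab
      simpa [hω₀.ne', Real.exp_eq_exp] using hab
    rw [← himage,
      MeasureTheory.integral_image_eq_integral_abs_deriv_smul MeasurableSet.univ hderiv hinj]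
    rw [MeasureTheory.setIntegral_univ]
    have hsimp : ∀ t : ℝ, |ω₀ * Real.exp t| •
        Real.exp (-(2*κ) * (Real.log ((ω₀ * Real.exp t) / ω₀)) ^ 2) =
        (ω₀ * Real.exp (1/(8*κ))) * Real.exp (-(2*κ) * (t - 1/(4*κ)) ^ 2) := by
      intro t
      have h1 : (ω₀ * Real.exp t) / ω₀ = Real.exp t := by field_simp
      rw [h1, Real.log_exp, abs_of_pos (by positivity), smul_eq_mul]
      rw [mul_assoc, mul_comm (Real.exp t), ← Real.exp_add, mul_assoc, ← Real.exp_add]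
      congr 2
      field_simp
      ring
    simp_rw [hsimp]
    rw [MeasureTheory.integral_const_mul]
    have : (∫ t : ℝ, Real.exp (-(2*κ) * (t - 1/(4*κ)) ^ 2)) =
        ∫ t : ℝ, Real.exp (-(2*κ) * t ^ 2) := by
      exact MeasureTheory.integral_sub_right_eq_self
        (fun t => Real.exp (-(2*κ) * t ^ 2)) (1/(4*κ))
    rw [this, integral_gaussian]
    ring
  refine ⟨key, ?_⟩
  rw [key]
  have hπ : (0:ℝ) < Real.pi := Real.pi_pos
  have h1 : Real.sqrt (Real.pi / (2 * κ)) = 2 * Real.pi / Real.sqrt (8 * Real.pi * κ) := by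
    rw [eq_div_iff (by positivity), ← Real.sqrt_mul (by positivity)]
    rw [show Real.pi / (2 * κ) * (8 * Real.pi * κ) = (2 * Real.pi) ^ 2 by
      field_simp; ring]
    exact Real.sqrt_sq (by positivity)
  rw [h1]
  field_simp
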